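/- (Bit–phase error bound for M = 2.) Let θ be a real number with cos θ ≠ 0, and let (a_i^j, a_x^j, a_y^j, a_z^j)_{j∈S} be a finite family of quadruples of complex numbers. Define N'' := ∑_{j∈S} [sin²θ·(|a_i^j|² + |a_x^j|²) + (1+cos²θ)·(|a_y^j|² + |a_z^j|²)] and assume N'' > 0. Define the bit error rate e_b := (1/N'')·∑_j (|a_x^j|² sin²θ + |a_y^j|² + |a_z^j|² cos²θ) and the phase error rate e_p := (1/N'')·∑_j (|a_y^j|² + |a_z^j|²)·(1 + cos²θ). Then e_p ≤ ((1 + cos²θ)/cos²θ)·e_b. -/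

import Mathlib

theorem bit_phase_error_bound_M_eq_two
    {ι : Type*} [Fintype ι] (θ : ℝ) (hcos : Real.cos θ ≠ 0)
    (ai ax ay az : ι → ℂ)
    (N'' : ℝ)
    (hNdef : N'' = ∑ j : ι,
      (Real.sin θ ^ 2 * (‖ai j‖ ^ 2 + ‖ax j‖ ^ 2) +
        (1 + Real.cos θ ^ 2) * (‖ay j‖ ^ 2 + ‖az j‖ ^ 2)))
    (hN : 0 < N'')
    (eb ep : ℝ)
    (heb : eb = (1 / N'') * ∑ j : ι,
      (‖ax j‖ ^ 2 * Real.sin θ ^ 2 + ‖ay j‖ ^ 2 +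
        ‖az j‖ ^ 2 * Real.cos θ ^ 2))
    (hep : ep = (1 / N'') * ∑ j : ι,
      (‖ay j‖ ^ 2 + ‖az j‖ ^ 2) * (1 + Real.cos θ ^ 2)) :
    ep ≤ ((1 + Real.cos θ ^ 2) / Real.cos θ ^ 2) * eb := by
  have hc2 : 0 < Real.cos θ ^ 2 := by positivity
  have key : (∑ j : ι,
      (‖ay j‖ ^ 2 + ‖az j‖ ^ 2) * (1 + Real.cos θ ^ 2)) ≤
      ((1 + Real.cos θ ^ 2) / Real.cos θ ^ 2) * ∑ j : ι,
      (‖ax j‖ ^ 2 * Real.sin θ ^ 2 + ‖ay j‖ ^ 2 +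
        ‖az j‖ ^ 2 * Real.cos θ ^ 2) := by
    rw [Finset.mul_sum]
    apply Finset.sum_le_sum
    intro j _
    rw [div_mul_eq_mul_div, le_div_iff₀ hc2]
    have hx : (0:ℝ) ≤ ‖ax j‖ ^ 2 := sq_nonneg _
    have hy : (0:ℝ) ≤ ‖ay j‖ ^ 2 := sq_nonneg _
    have hz : (0:ℝ) ≤ ‖az j‖ ^ 2 := sq_nonneg _
    have hs : Real.sin θ ^ 2 = 1 - Real.cos θ ^ 2 := by
      have := Real.sin_sq_add_cos_sq θ; linarith
    have hc1 : Real.cos θ ^ 2 ≤ 1 := Real.cos_sq_le_one θ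
    rw [hs]
    nlinarith [mul_nonneg (by positivity : (0:ℝ) ≤ 1 + Real.cos θ ^ 2)
        (mul_nonneg hx (sub_nonneg.2 hc1)),
      mul_nonneg (by positivity : (0:ℝ) ≤ 1 + Real.cos θ ^ 2)
        (mul_nonneg hy (sub_nonneg.2 hc1))]
  rw [hep, heb]
  have hpos : (0:ℝ) ≤ 1 / N'' := by positivity
  calc (1 / N'') * ∑ j : ι,
        (‖ay j‖ ^ 2 + ‖az j‖ ^ 2) * (1 + Real.cos θ ^ 2)
      ≤ (1 / N'') * (((1 + Real.cos θ ^ 2) / Real.cos θ ^ 2) * ∑ j : ι,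
        (‖ax j‖ ^ 2 * Real.sin θ ^ 2 + ‖ay j‖ ^ 2 +
          ‖az j‖ ^ 2 * Real.cos θ ^ 2)) :=
        mul_le_mul_of_nonneg_left key hpos
    _ = ((1 + Real.cos θ ^ 2) / Real.cos θ ^ 2) * ((1 / N'') * ∑ j : ι,
        (‖ax j‖ ^ 2 * Real.sin θ ^ 2 + ‖ay j‖ ^ 2 +
          ‖az j‖ ^ 2 * Real.cos θ ^ 2)) := by ring
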